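/- Let Y be a real-valued random variable on a probability space whose law is gaussianReal δ v with v ≠ 0, and let B = sgn ∘ Y be its binarization. Then H[B] ≤ log 2, and H[B] = log 2 if and only if δ = 0. (The information entropy of the binarized average-pooled Gaussian feature is maximized exactly at offset δ = 0, which is the EMA-avg optimum.) -/

import Mathlib

open MeasureTheory ProbabilityTheory
open scoped NNReal ENNReal

/-- The binarization (sign) function: `sgn x = 1` if `x ≥ 0`, else `−1`. -/
noncomputable def sgn (x : ℝ) : ℝ := if 0 ≤ x then 1 else -1

/-- Shannon entropy (natural logarithm) of a random variable `X`:
`H[X] = −∑_x P(X = x)·log P(X = x)`. -/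
noncomputable def shannonEntropy {Ω S : Type*} [MeasurableSpace Ω]
    (μ : Measure Ω) (X : Ω → S) : ℝ :=
  -∑' s : S, (μ (X ⁻¹' {s})).toReal * Real.log (μ (X ⁻¹' {s})).toReal

lemma gauss_pos {m : ℝ} {v : ℝ≥0} (hv : v ≠ 0) {s : Set ℝ} (hs : 0 < volume s) :
    0 < gaussianReal m v s := by
  rcases eq_or_ne (gaussianReal m v s) 0 with h | h
  · exact absurd ((gaussianReal_absolutelyContinuous' m hv) h) hs.ne'
  · exact h.bot_lt

lemma gauss_singleton {m x : ℝ} {v : ℝ≥0} (hv : v ≠ 0) :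
    gaussianReal m v {x} = 0 :=
  (gaussianReal_absolutelyContinuous m hv) Real.volume_singleton

lemma gauss_Ici_half {v : ℝ≥0} (hv : v ≠ 0) :
    gaussianReal 0 v (Set.Ici 0) = 1/2 := by
  have hmap := gaussianReal_map_const_mul (μ := 0) (v := v) (-1)
  have h1 : gaussianReal 0 v (Set.Ici 0) = gaussianReal 0 v (Set.Iic 0) := by
    have hone : (⟨(-1:ℝ)^2, by positivity⟩ : ℝ≥0) = 1 := by ext; norm_num
    replace hmap : Measure.map (fun x : ℝ => -1 * x) (gaussianReal 0 v) = gaussianReal 0 v := by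
      rw [hmap]; congr 1
      · simp
      · ext; norm_num
    conv_lhs => rw [← hmap]
    rw [Measure.map_apply (by fun_prop) measurableSet_Ici]
    congr 1
    ext x
    simp [neg_nonneg]
  have h2 : gaussianReal 0 v (Set.Iic 0) = gaussianReal 0 v (Set.Iio 0) := by
    rw [← Set.Iio_union_right, measure_union (by simp) (measurableSet_singleton 0),
      gauss_singleton hv, add_zero]
  have h3 : gaussianReal 0 v (Set.Ici 0) + gaussianReal 0 v (Set.Iio 0) = 1 := by
    rw [← measure_union ?_ measurableSet_Iio, Set.union_comm, Set.Iio_union_Ici]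
    · simp
    · rw [Set.disjoint_left]
      intro a h h'
      simp only [Set.mem_Ici] at h
      simp only [Set.mem_Iio] at h'
      linarith
  rw [h1, h2] at h3
  have h4 : gaussianReal 0 v (Set.Iio 0) ≠ ⊤ := measure_ne_top _ _
  -- from a + a = 1 conclude a = 1/2
  have : (2 : ℝ≥0∞) * gaussianReal 0 v (Set.Iio 0) = 1 := by
    rw [two_mul]; exact h3
  rw [h1, h2]
  rw [ENNReal.eq_div_iff (by norm_num) (by norm_num), mul_comm] at *
  exact this

lemma gauss_Ici_shift {v : ℝ≥0} (δ : ℝ) :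
    gaussianReal δ v (Set.Ici 0) = gaussianReal 0 v (Set.Ici (-δ)) := by
  have hmap := gaussianReal_map_add_const (μ := 0) (v := v) δ
  rw [zero_add] at hmap
  rw [← hmap, Measure.map_apply (by fun_prop) measurableSet_Ici]
  congr 1
  ext x
  simp only [Set.mem_preimage, Set.mem_Ici]
  constructor <;> intro h <;> linarith

lemma gauss_Ici_eq_half_iff {v : ℝ≥0} (hv : v ≠ 0) (δ : ℝ) :
    gaussianReal δ v (Set.Ici 0) = 1/2 ↔ δ = 0 := by
  constructor
  · intro h
    by_contra hδ
    rw [gauss_Ici_shift] at h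
    rcases lt_or_gt_of_ne hδ with hlt | hgt
    · -- δ < 0 : Ici (-δ) ⊂ Ici 0, G(Ici 0) = G(Ico 0 (-δ)) + G(Ici (-δ))
      have hsplit : gaussianReal 0 v (Set.Ici 0)
          = gaussianReal 0 v (Set.Ico 0 (-δ)) + gaussianReal 0 v (Set.Ici (-δ)) := by
        rw [← measure_union ?_ measurableSet_Ici, Set.Ico_union_Ici_eq_Ici (by linarith)]
        rw [Set.disjoint_left]
        intro a ha ha'
        simp only [Set.mem_Ico] at ha
        simp only [Set.mem_Ici] at ha'
        linarith
      have hpos : 0 < gaussianReal 0 v (Set.Ico 0 (-δ)) :=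
        gauss_pos hv (by rw [Real.volume_Ico]; simp; linarith)
      rw [gauss_Ici_half hv, h] at hsplit
      have hlt := ENNReal.lt_add_right (show (1:ℝ≥0∞)/2 ≠ ⊤ by norm_num)
        hpos.ne'
      rw [add_comm, ← hsplit] at hlt
      exact absurd hlt (lt_irrefl _)
    · -- δ > 0 : Ici (-δ) = Ico (-δ) 0 ∪ Ici 0
      have hsplit : gaussianReal 0 v (Set.Ici (-δ))
          = gaussianReal 0 v (Set.Ico (-δ) 0) + gaussianReal 0 v (Set.Ici 0) := by
        rw [← measure_union ?_ measurableSet_Ici, Set.Ico_union_Ici_eq_Ici (by linarith)]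
        rw [Set.disjoint_left]
        intro a ha ha'
        simp only [Set.mem_Ico] at ha
        simp only [Set.mem_Ici] at ha'
        linarith
      have hpos : 0 < gaussianReal 0 v (Set.Ico (-δ) 0) :=
        gauss_pos hv (by rw [Real.volume_Ico]; simp; linarith)
      rw [gauss_Ici_half hv, h] at hsplit
      have hlt := ENNReal.lt_add_right (show (1:ℝ≥0∞)/2 ≠ ⊤ by norm_num)
        hpos.ne'
      rw [add_comm, ← hsplit] at hlt
      exact absurd hlt (lt_irrefl _)
  · intro h
    subst h
    rw [gauss_Ici_shift, neg_zero, gauss_Ici_half hv]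

/-- If `Y` has law `gaussianReal δ v` with `v ≠ 0` and `B = sgn ∘ Y`, then `H[B] ≤ log 2`
with equality iff `δ = 0`. -/
theorem entropy_sgn_gaussian_le_log_two_iff
    {Ω : Type*} [MeasurableSpace Ω] (μ : Measure Ω) [IsProbabilityMeasure μ]
    (Y : Ω → ℝ) (hY : Measurable Y) (δ : ℝ) (v : ℝ≥0) (hv : v ≠ 0)
    (hlaw : Measure.map Y μ = gaussianReal δ v) :
    shannonEntropy μ (sgn ∘ Y) ≤ Real.log 2 ∧
      (shannonEntropy μ (sgn ∘ Y) = Real.log 2 ↔ δ = 0) := by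
  -- preimages
  have hpre1 : (sgn ∘ Y) ⁻¹' {1} = Y ⁻¹' (Set.Ici 0) := by
    ext ω
    by_cases h : 0 ≤ Y ω <;> norm_num [sgn, h]
  have hpre2 : (sgn ∘ Y) ⁻¹' {-1} = Y ⁻¹' (Set.Iio 0) := by
    ext ω
    simp only [Set.mem_preimage, Function.comp_apply, Set.mem_singleton_iff, Set.mem_Iio, sgn]
    by_cases h : 0 ≤ Y ω
    · simp only [if_pos h]
      constructor
      · intro h'; norm_num at h'
      · intro h'; linarith
    · simp only [if_neg h]
      simp [not_le.mp h]
  set p : ℝ := (μ ((sgn ∘ Y) ⁻¹' {1})).toReal with hp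
  set q : ℝ := (μ ((sgn ∘ Y) ⁻¹' {-1})).toReal with hq
  have hpq : p + q = 1 := by
    rw [hp, hq, hpre1, hpre2, ← ENNReal.toReal_add (measure_ne_top _ _) (measure_ne_top _ _),
      ← measure_union ?_ (hY measurableSet_Iio)]
    · rw [← Set.preimage_union, Set.union_comm, Set.Iio_union_Ici, Set.preimage_univ]
      simp
    · rw [Set.disjoint_left]
      rintro ω hω hω'
      simp only [Set.mem_preimage, Set.mem_Ici, Set.mem_Iio] at hω hω'
      linarith
  -- entropy = binEntropy p
  have hent : shannonEntropy μ (sgn ∘ Y) = Real.binEntropy p := by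
    rw [shannonEntropy]
    have hsum : ∑' s : ℝ, (μ ((sgn ∘ Y) ⁻¹' {s})).toReal *
        Real.log (μ ((sgn ∘ Y) ⁻¹' {s})).toReal
        = ∑ s ∈ ({1, -1} : Finset ℝ), (μ ((sgn ∘ Y) ⁻¹' {s})).toReal *
          Real.log (μ ((sgn ∘ Y) ⁻¹' {s})).toReal := by
      refine tsum_eq_sum ?_
      intro b hb
      simp only [Finset.mem_insert, Finset.mem_singleton, not_or] at hb
      have : (sgn ∘ Y) ⁻¹' {b} = ∅ := by
        ext ω
        simp only [Set.mem_preimage, Function.comp_apply, Set.mem_singleton_iff,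
          Set.mem_empty_iff_false, iff_false, sgn]
        split_ifs
        · exact fun h => hb.1 h.symm
        · exact fun h => hb.2 h.symm
      rw [this]
      simp
    rw [hsum, Finset.sum_pair (by norm_num)]
    have hq1 : q = 1 - p := by linarith
    rw [Real.binEntropy, ← hp, ← hq, hq1, Real.log_inv, Real.log_inv]
    ring
  -- p in terms of Gaussian
  have hmeas : μ ((sgn ∘ Y) ⁻¹' {1}) = gaussianReal δ v (Set.Ici 0) := by
    rw [hpre1, ← Measure.map_apply hY measurableSet_Ici, hlaw]
  have hpiff : p = 2⁻¹ ↔ δ = 0 := by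
    rw [← gauss_Ici_eq_half_iff hv δ, hp, hmeas]
    have hhalf : ((1:ℝ≥0∞)/2).toReal = 2⁻¹ := by
      rw [ENNReal.toReal_div]
      norm_num
    constructor
    · intro h
      refine (ENNReal.toReal_eq_toReal_iff' (measure_ne_top _ _) (by norm_num)).mp ?_
      rw [h, hhalf]
    · intro h
      rw [h, hhalf]
  constructor
  · rw [hent]; exact Real.binEntropy_le_log_two
  · rw [hent, Real.binEntropy_eq_log_two, hpiff]
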